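/- arXiv:2303.10531 — 2 statements merged into one kernel-verified Lean document; each statement's English description precedes it below -/
import Mathlib

section
/- Let 1 < α < 2. The function ξ(θ) = ((1−θ)/(1−α)) · ln((1−θ)/(α−θ)), defined on the open interval (2−α, 1), satisfies ξ(θ) < ln 2 for all θ in (2−α,1), and sup ξ = ln 2, attained in the limit θ → (2−α)⁺. -/
open Real Set Filter

lemma xi_aux_deriv (x : ℝ) (hx : 0 < x) :
    HasDerivAt (fun s : ℝ => s * (Real.log (s + 1) - Real.log s))
      (1 * (Real.log (x + 1) - Real.log x) + x * (1 / (x + 1) - 1 / x)) x := by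
  have h1 : HasDerivAt (fun s : ℝ => Real.log (s + 1)) (1 / (x + 1)) x := by
    have := (Real.hasDerivAt_log (by positivity : x + 1 ≠ 0)).comp x
      ((hasDerivAt_id x).add_const 1)
    simpa [one_div, Function.comp_def] using this
  have h2 : HasDerivAt Real.log (1 / x) x := by
    simpa [one_div] using Real.hasDerivAt_log hx.ne'
  exact (hasDerivAt_id x).mul (h1.sub h2)

lemma xi_aux_mono : StrictMonoOn (fun s : ℝ => s * (Real.log (s + 1) - Real.log s))
    (Set.Ioi (0 : ℝ)) := by
  apply strictMonoOn_of_deriv_pos (convex_Ioi 0)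
  · intro x hx
    simp only [mem_Ioi] at hx
    exact (xi_aux_deriv x hx).continuousAt.continuousWithinAt
  · intro x hx
    rw [interior_Ioi, mem_Ioi] at hx
    rw [(xi_aux_deriv x hx).deriv]
    have hx1 : (0:ℝ) < x + 1 := by linarith
    have hne : x / (x + 1) ≠ 1 := by
      intro h
      rw [div_eq_one_iff_eq hx1.ne'] at h
      linarith
    have hlog : Real.log (x / (x + 1)) < x / (x + 1) - 1 :=
      Real.log_lt_sub_one_of_pos (by positivity) hne
    rw [Real.log_div hx.ne' hx1.ne'] at hlog
    have key : x / (x + 1) - 1 = -(1 / (x + 1)) := by field_simp; ring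
    have key2 : x * (1 / (x + 1) - 1 / x) = -(1 / (x + 1)) := by
      field_simp
      ring
    rw [key] at hlog
    rw [key2]
    linarith

lemma xi_aux_lt (s : ℝ) (hs0 : 0 < s) (hs1 : s < 1) :
    s * (Real.log (s + 1) - Real.log s) < Real.log 2 := by
  have := xi_aux_mono (mem_Ioi.mpr hs0) (mem_Ioi.mpr one_pos) hs1
  norm_num at this
  exact this

theorem xi_sup_ln_two (α : ℝ) (h1 : 1 < α) (h2 : α < 2) :
    (∀ θ ∈ Set.Ioo (2 - α) 1,
        ((1 - θ) / (1 - α)) * Real.log ((1 - θ) / (α - θ)) < Real.log 2) ∧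
    sSup ((fun θ : ℝ => ((1 - θ) / (1 - α)) * Real.log ((1 - θ) / (α - θ))) ''
        Set.Ioo (2 - α) 1) = Real.log 2 ∧
    Filter.Tendsto (fun θ : ℝ => ((1 - θ) / (1 - α)) * Real.log ((1 - θ) / (α - θ)))
      (nhdsWithin (2 - α) (Set.Ioi (2 - α))) (nhds (Real.log 2)) := by
  have hα1 : (0:ℝ) < α - 1 := by linarith
  -- Part 1
  have part1 : ∀ θ ∈ Set.Ioo (2 - α) 1,
      ((1 - θ) / (1 - α)) * Real.log ((1 - θ) / (α - θ)) < Real.log 2 := by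
    intro θ hθ
    obtain ⟨hθ1, hθ2⟩ := hθ
    have ht : (0:ℝ) < 1 - θ := by linarith
    have hat : (0:ℝ) < α - θ := by linarith
    set s : ℝ := (1 - θ) / (α - 1) with hs
    have hs0 : 0 < s := by positivity
    have hs1 : s < 1 := by
      rw [hs, div_lt_one hα1]; linarith
    have key : ((1 - θ) / (1 - α)) * Real.log ((1 - θ) / (α - θ))
        = s * (Real.log (s + 1) - Real.log s) := by
      have e1 : s + 1 = (α - θ) / (α - 1) := by
        rw [hs]; field_simp; ring
      rw [e1, Real.log_div ht.ne' hat.ne',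
        Real.log_div hat.ne' hα1.ne', Real.log_div ht.ne' hα1.ne',
        show (1:ℝ) - α = -(α - 1) by ring, div_neg, ← hs]
      ring
    rw [key]
    exact xi_aux_lt s hs0 hs1
  -- Part 3 (tendsto)
  have hval : ((1 - (2 - α)) / (1 - α)) * Real.log ((1 - (2 - α)) / (α - (2 - α)))
      = Real.log 2 := by
    have e1 : (1 - (2 - α)) / (1 - α) = -1 := by
      rw [show (1:ℝ) - (2 - α) = α - 1 by ring, show (1:ℝ) - α = -(α - 1) by ring,
        div_neg, div_self hα1.ne']
    have e2 : (1 - (2 - α)) / (α - (2 - α)) = 2⁻¹ := by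
      rw [show α - (2 - α) = 2 * (α - 1) by ring, show 1 - (2 - α) = α - 1 by ring]
      rw [div_eq_iff (by positivity)]
      ring
    rw [e1, e2, Real.log_inv]
    ring
  have part3 : Filter.Tendsto (fun θ : ℝ => ((1 - θ) / (1 - α)) * Real.log ((1 - θ) / (α - θ)))
      (nhdsWithin (2 - α) (Set.Ioi (2 - α))) (nhds (Real.log 2)) := by
    have hc : ContinuousAt (fun θ : ℝ => ((1 - θ) / (1 - α)) * Real.log ((1 - θ) / (α - θ)))
        (2 - α) := by
      have c1 : ContinuousAt (fun θ : ℝ => (1 - θ) / (1 - α)) (2 - α) :=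
        ((continuous_const.sub continuous_id).div_const _).continuousAt
      have c2 : ContinuousAt (fun θ : ℝ => (1 - θ) / (α - θ)) (2 - α) := by
        apply ContinuousAt.div
        · exact (continuous_const.sub continuous_id).continuousAt
        · exact (continuous_const.sub continuous_id).continuousAt
        · exact sub_ne_zero.mpr (by intro h; rw [h] at h2; linarith)
      have hne0 : (1 - (2 - α)) / (α - (2 - α)) ≠ 0 := by
        have h3 : (0:ℝ) < 1 - (2 - α) := by linarith
        have h4 : (0:ℝ) < α - (2 - α) := by linarith
        positivity
      exact c1.mul (c2.log hne0)
    have := hc.continuousWithinAt (s := Set.Ioi (2 - α))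
    rw [ContinuousWithinAt] at this
    rwa [hval] at this
  refine ⟨part1, ?_, part3⟩
  -- Part 2
  have hne : (2 - α : ℝ) < 1 := by linarith
  have hbdd : BddAbove ((fun θ : ℝ => ((1 - θ) / (1 - α)) * Real.log ((1 - θ) / (α - θ))) ''
      Set.Ioo (2 - α) 1) := by
    refine ⟨Real.log 2, ?_⟩
    rintro x ⟨θ, hθ, rfl⟩
    exact (part1 θ hθ).le
  apply le_antisymm
  · apply csSup_le
    · exact (Set.nonempty_Ioo.mpr hne).image _
    · rintro x ⟨θ, hθ, rfl⟩
      exact (part1 θ hθ).le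
  · refine le_of_tendsto part3 ?_
    filter_upwards [Ioo_mem_nhdsGT_of_mem (left_mem_Ico.mpr hne)] with θ hθ
    exact le_csSup hbdd (Set.mem_image_of_mem _ hθ)
end

section
/- Let ħ > 0 and let ν : ℝ^{2d} → ℝ be measurable with 0 ≤ ν ≤ 1 a.e., ∫ ν = (πħ)^d, and suppose that for every 1 < q < 2 and every θ ∈ (2−q, 1) we have ∫ ν^q ≤ (πħ)^d · ((1−θ)/(q−θ))^{d(1−θ)}. Then −∫ ν ln ν ≥ (πħ)^d · d · ln 2. -/
open MeasureTheory Real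

-- pointwise inequality: for X ∈ [0,1], σ > 0: 0 ≤ (X - X^(1+σ))/σ ≤ -(X log X)
lemma pointwise_aux {X σ : ℝ} (h0 : 0 ≤ X) (h1 : X ≤ 1) (hσ : 0 < σ) :
    0 ≤ (X - X ^ (1 + σ)) / σ ∧ (X - X ^ (1 + σ)) / σ ≤ -(X * Real.log X) := by
  rcases eq_or_lt_of_le h0 with h | hX
  · simp [← h, Real.zero_rpow (by positivity : (1:ℝ) + σ ≠ 0)]
  · have hpow : X ^ (1 + σ) = X * X ^ σ := by
      rw [Real.rpow_add hX, Real.rpow_one]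
    have hle1 : X ^ σ ≤ 1 := Real.rpow_le_one h0 h1 hσ.le
    have hlog : Real.log (X ^ σ) = σ * Real.log X := Real.log_rpow hX σ
    have hls : σ * Real.log X ≤ X ^ σ - 1 := by
      rw [← hlog]; exact Real.log_le_sub_one_of_pos (Real.rpow_pos_of_pos hX σ)
    constructor
    · apply div_nonneg _ hσ.le
      rw [hpow]; nlinarith
    · rw [div_le_iff₀ hσ, hpow]; nlinarith

theorem entropy_lower_bound {d : ℕ} (hbar : ℝ) (hhbar : 0 < hbar)
    (ν : (Fin (2 * d) → ℝ) → ℝ) (hνm : Measurable ν)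
    (hν01 : ∀ᵐ z, 0 ≤ ν z ∧ ν z ≤ 1)
    (hν1 : MeasureTheory.Integrable ν volume)
    (hνint : ∫ z, ν z = (π * hbar) ^ d)
    (hq : ∀ q θ : ℝ, 1 < q → q < 2 → 2 - q < θ → θ < 1 →
      (∫ z, ν z ^ q) ≤ (π * hbar) ^ d * ((1 - θ) / (q - θ)) ^ ((d : ℝ) * (1 - θ))) :
    ENNReal.ofReal ((π * hbar) ^ d * d * Real.log 2) ≤
      ∫⁻ z, ENNReal.ofReal (-(ν z * Real.log (ν z))) := by
  set C : ℝ := (π * hbar) ^ d with hC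
  have hCpos : 0 < C := by positivity
  set L := ∫⁻ z, ENNReal.ofReal (-(ν z * Real.log (ν z))) with hL
  set h : ℝ → ℝ := fun ε => C * (1 - Real.exp (-(↑d * ε) * Real.log (2 + ε))) / (ε * (1 + ε))
    with hh
  -- Step 1: for every ε ∈ (0, 1/2), ofReal (h ε) ≤ L
  have key : ∀ ε : ℝ, ε ∈ Set.Ioo (0:ℝ) (1/2) → ENNReal.ofReal (h ε) ≤ L := by
    intro ε ⟨hε0, hε2⟩
    set σ : ℝ := ε * (1 + ε) with hσdef
    have hσ : 0 < σ := by nlinarith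
    set q : ℝ := 1 + σ with hqdef
    set θ : ℝ := 1 - ε with hθdef
    have hq1 : 1 < q := by simp [hqdef]; linarith
    have hq2 : q < 2 := by simp [hqdef, hσdef]; nlinarith
    have hθq : 2 - q < θ := by simp [hqdef, hθdef, hσdef]; nlinarith
    have hθ1 : θ < 1 := by simp [hθdef]; linarith
    have hbound := hq q θ hq1 hq2 hθq hθ1
    have hratio : (1 - θ) / (q - θ) = 1 / (2 + ε) := by
      rw [hqdef, hθdef, hσdef]
      rw [div_eq_div_iff (by nlinarith) (by nlinarith)]
      ring
    have hexpo : (d:ℝ) * (1 - θ) = ↑d * ε := by rw [hθdef]; ring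
    have hrpow : (1 / (2 + ε) : ℝ) ^ ((d:ℝ) * ε) = Real.exp (-(↑d * ε) * Real.log (2 + ε)) := by
      rw [Real.rpow_def_of_pos (by positivity), one_div, Real.log_inv]
      ring_nf
    have hbound' : (∫ z, ν z ^ q) ≤ C * Real.exp (-(↑d * ε) * Real.log (2 + ε)) := by
      rw [← hrpow]
      calc (∫ z, ν z ^ q) ≤ C * ((1 - θ) / (q - θ)) ^ ((d : ℝ) * (1 - θ)) := hbound
        _ = C * (1 / (2 + ε)) ^ ((d:ℝ) * ε) := by rw [hratio, hexpo]
    -- integrability of ν ^ q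
    have hqint : Integrable (fun z => ν z ^ q) volume := by
      have hm : Measurable (fun z => ν z ^ q) := by fun_prop
      apply hν1.mono' hm.aestronglyMeasurable
      filter_upwards [hν01] with z ⟨hz0, hz1⟩
      rw [Real.norm_eq_abs, abs_of_nonneg (Real.rpow_nonneg hz0 q)]
      rcases eq_or_lt_of_le hz0 with h | hz
      · simp [← h, Real.zero_rpow (by positivity : q ≠ 0)]
      · calc ν z ^ q ≤ ν z ^ (1:ℝ) := Real.rpow_le_rpow_of_exponent_ge hz hz1 hq1.le
          _ = ν z := Real.rpow_one _
    set g : (Fin (2 * d) → ℝ) → ℝ := fun z => (ν z - ν z ^ q) / σ with hg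
    have hgint : Integrable g volume := (hν1.sub hqint).div_const σ
    have hgnn : 0 ≤ᶠ[ae volume] g := by
      filter_upwards [hν01] with z ⟨hz0, hz1⟩
      exact (pointwise_aux hz0 hz1 hσ).1
    -- lintegral comparison
    have hle1 : ENNReal.ofReal (∫ z, g z) ≤ L := by
      rw [ofReal_integral_eq_lintegral_ofReal hgint hgnn]
      apply lintegral_mono_ae
      filter_upwards [hν01] with z ⟨hz0, hz1⟩
      exact ENNReal.ofReal_le_ofReal (pointwise_aux hz0 hz1 hσ).2
    -- value of ∫ g
    have hgval : (∫ z, g z) = (C - ∫ z, ν z ^ q) / σ := by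
      rw [hg]
      rw [integral_div, integral_sub hν1 hqint, hνint]
    have hhle : h ε ≤ ∫ z, g z := by
      rw [hgval, hh]
      rw [div_le_div_iff₀ (by nlinarith) hσ]
      rw [← hσdef]
      nlinarith [mul_le_mul_of_nonneg_right hbound' hσ.le]
    exact le_trans (ENNReal.ofReal_le_ofReal hhle) hle1
  -- Step 2: h tends to C * d * log 2 as ε → 0⁺
  set F : ℝ → ℝ := fun ε => 1 - Real.exp (-(↑d * ε) * Real.log (2 + ε)) with hF
  have hderiv : HasDerivAt F ((d:ℝ) * Real.log 2) 0 := by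
    have h1 : HasDerivAt (fun ε : ℝ => (d:ℝ) * ε) (d:ℝ) 0 := by
      simpa using (hasDerivAt_id (0:ℝ)).const_mul (d:ℝ)
    have h2 : HasDerivAt (fun ε : ℝ => Real.log (2 + ε)) (1/2) 0 := by
      have := ((hasDerivAt_id (0:ℝ)).const_add 2).log (by norm_num)
      simpa using this
    have h3 : HasDerivAt (fun ε : ℝ => -((d:ℝ) * ε) * Real.log (2 + ε))
        (-((d:ℝ) * Real.log 2)) 0 := by
      have := (h1.neg.mul h2)
      exact this.congr_deriv (by simp)
    have h4 := h3.exp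
    have h5 := h4.const_sub 1
    simpa [hF] using h5
  have hslope : Filter.Tendsto (fun ε => F ε / ε) (nhdsWithin 0 (Set.Ioi 0))
      (nhds ((d:ℝ) * Real.log 2)) := by
    have := hasDerivAt_iff_tendsto_slope.mp hderiv
    have h2 : Filter.Tendsto (slope F 0) (nhdsWithin 0 (Set.Ioi 0))
        (nhds ((d:ℝ) * Real.log 2)) :=
      this.mono_left (nhdsWithin_mono 0 (fun x hx => ne_of_gt hx))
    apply h2.congr
    intro x
    simp [slope, hF, div_eq_inv_mul]
  have hinv : Filter.Tendsto (fun ε : ℝ => (1 + ε)⁻¹) (nhdsWithin 0 (Set.Ioi 0))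
      (nhds 1) := by
    have : Filter.Tendsto (fun ε : ℝ => (1 + ε)⁻¹) (nhds 0) (nhds ((1 + 0:ℝ)⁻¹)) :=
      ((continuous_const.add continuous_id).tendsto 0).inv₀ (by norm_num)
    simpa using this.mono_left nhdsWithin_le_nhds
  have hhtend : Filter.Tendsto h (nhdsWithin 0 (Set.Ioi 0))
      (nhds (C * ↑d * Real.log 2)) := by
    have hcomb : Filter.Tendsto (fun ε => C * (F ε / ε) * (1 + ε)⁻¹)
        (nhdsWithin 0 (Set.Ioi 0)) (nhds (C * ((d:ℝ) * Real.log 2) * 1)) :=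
      ((tendsto_const_nhds.mul hslope).mul hinv)
    have heq : ∀ᶠ ε in nhdsWithin 0 (Set.Ioi 0),
        C * (F ε / ε) * (1 + ε)⁻¹ = h ε := by
      filter_upwards [self_mem_nhdsWithin] with ε hε
      have hε0 : (0:ℝ) < ε := hε
      rw [hh, hF]
      field_simp
    have := hcomb.congr' heq
    simpa [mul_one, mul_assoc] using this
  have hotend : Filter.Tendsto (fun ε => ENNReal.ofReal (h ε)) (nhdsWithin 0 (Set.Ioi 0))
      (nhds (ENNReal.ofReal (C * ↑d * Real.log 2))) :=
    (ENNReal.continuous_ofReal.tendsto _).comp hhtend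
  have hev : ∀ᶠ ε in nhdsWithin 0 (Set.Ioi 0), ENNReal.ofReal (h ε) ≤ L := by
    filter_upwards [Ioo_mem_nhdsGT_of_mem (by norm_num : (0:ℝ) ∈ Set.Ico (0:ℝ) (1/2))]
      with ε hε using key ε hε
  exact le_of_tendsto hotend hev
end
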